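/- Let D(g) be the Drinfel'd double Lie algebra of a finite-dimensional real Lie bialgebra with structure constants (f, c) satisfying the compatibility condition, let ι : D(g) → U(D(g)) be the canonical embedding, and set r = Σ_i ι(x^i) ⊗ ι(X_i) in U(D(g)) ⊗ U(D(g)). Then the cocommutator δ_DD generated by r via δ_DD(Y) = [ι(Y) ⊗ 1 + 1 ⊗ ι(Y), r] satisfies, for every basis element: [ι(x^n) ⊗ 1 + 1 ⊗ ι(x^n), r] = Σ_{l,m} c^n_{lm} ι(x^l) ⊗ ι(x^m), and [ι(X_n) ⊗ 1 + 1 ⊗ ι(X_n), r] = − Σ_{l,m} f^{lm}_n ι(X_l) ⊗ ι(X_m), where the brackets are commutators in U(D(g)) ⊗ U(D(g)). In particular, δ_DD restricts to δ on g and to −η on g* (η being the cocommutator of the dual Lie bialgebra). -/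

import Mathlib

open scoped BigOperators TensorProduct

/-- Commutator of `a ⊗ 1 + 1 ⊗ a` with a simple tensor. -/
lemma comm_tmul_aux {A : Type} [Ring A] [Algebra ℝ A] (a u v : A) :
    (a ⊗ₜ[ℝ] (1 : A) + (1 : A) ⊗ₜ[ℝ] a) * (u ⊗ₜ[ℝ] v) -
      (u ⊗ₜ[ℝ] v) * (a ⊗ₜ[ℝ] (1 : A) + (1 : A) ⊗ₜ[ℝ] a) =
    (a * u - u * a) ⊗ₜ[ℝ] v + u ⊗ₜ[ℝ] (a * v - v * a) := by
  simp only [add_mul, mul_add, Algebra.TensorProduct.tmul_mul_tmul, one_mul, mul_one,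
    TensorProduct.sub_tmul, TensorProduct.tmul_sub]
  abel

/-- The canonical classical r-matrix `r = Σ_i x^i ⊗ X_i` of a Drinfel'd double,
regarded as an element of `U(D(g)) ⊗ U(D(g))`. -/
noncomputable def rmat (n : ℕ) (L : Type) [LieRing L] [LieAlgebra ℝ L]
    (b : Module.Basis (Fin n ⊕ Fin n) ℝ L) :
    TensorProduct ℝ (UniversalEnvelopingAlgebra ℝ L) (UniversalEnvelopingAlgebra ℝ L) :=
  ∑ i : Fin n, UniversalEnvelopingAlgebra.ι ℝ (b (Sum.inl i)) ⊗ₜ[ℝ]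
    UniversalEnvelopingAlgebra.ι ℝ (b (Sum.inr i))

/-- The cocommutator `δ_DD(Y) = [Y ⊗ 1 + 1 ⊗ Y, r]` generated by the canonical
r-matrix of a Drinfel'd double restricts to `δ` on `g` and to `−η` on `g*`:
`δ_DD(x^n) = c^n_{lm} x^l ⊗ x^m` and `δ_DD(X_n) = −f^{lm}_n X_l ⊗ X_m`.

Here `D(g)` is formalized as any real Lie algebra `L` with a basis indexed by
`Fin n ⊕ Fin n` (`Sum.inl i ↦ x^i`, `Sum.inr i ↦ X_i`) whose brackets are given by the
Drinfel'd double structure constants `(f, c)` (with `f i j k = f^{ij}_k`,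
`c k i j = c^k_{ij}`) satisfying the compatibility condition. -/
theorem double_cocommutator_from_rmatrix (n : ℕ) (f c : Fin n → Fin n → Fin n → ℝ)
    (hcomp : ∀ a b i j : Fin n,
      (∑ k, f a b k * c k i j) =
        ∑ k, (f a k i * c b k j + f k b i * c a k j + f a k j * c b i k +
          f k b j * c a i k))
    (L : Type) [LieRing L] [LieAlgebra ℝ L]
    (b : Module.Basis (Fin n ⊕ Fin n) ℝ L)
    (hxx : ∀ i j, ⁅b (Sum.inl i), b (Sum.inl j)⁆ = ∑ k, f i j k • b (Sum.inl k))
    (hXX : ∀ i j, ⁅b (Sum.inr i), b (Sum.inr j)⁆ = ∑ k, c k i j • b (Sum.inr k))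
    (hxX : ∀ i j, ⁅b (Sum.inl i), b (Sum.inr j)⁆ =
      (∑ k, c i j k • b (Sum.inl k)) - ∑ k, f i k j • b (Sum.inr k)) :
    (∀ m : Fin n,
      (UniversalEnvelopingAlgebra.ι ℝ (b (Sum.inl m)) ⊗ₜ[ℝ]
              (1 : UniversalEnvelopingAlgebra ℝ L) +
            (1 : UniversalEnvelopingAlgebra ℝ L) ⊗ₜ[ℝ]
              UniversalEnvelopingAlgebra.ι ℝ (b (Sum.inl m))) * rmat n L b -
          rmat n L b *
            (UniversalEnvelopingAlgebra.ι ℝ (b (Sum.inl m)) ⊗ₜ[ℝ]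
                (1 : UniversalEnvelopingAlgebra ℝ L) +
              (1 : UniversalEnvelopingAlgebra ℝ L) ⊗ₜ[ℝ]
                UniversalEnvelopingAlgebra.ι ℝ (b (Sum.inl m))) =
        ∑ i : Fin n, ∑ j : Fin n,
          c m i j • (UniversalEnvelopingAlgebra.ι ℝ (b (Sum.inl i)) ⊗ₜ[ℝ]
            UniversalEnvelopingAlgebra.ι ℝ (b (Sum.inl j)))) ∧
    (∀ m : Fin n,
      (UniversalEnvelopingAlgebra.ι ℝ (b (Sum.inr m)) ⊗ₜ[ℝ]
              (1 : UniversalEnvelopingAlgebra ℝ L) +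
            (1 : UniversalEnvelopingAlgebra ℝ L) ⊗ₜ[ℝ]
              UniversalEnvelopingAlgebra.ι ℝ (b (Sum.inr m))) * rmat n L b -
          rmat n L b *
            (UniversalEnvelopingAlgebra.ι ℝ (b (Sum.inr m)) ⊗ₜ[ℝ]
                (1 : UniversalEnvelopingAlgebra ℝ L) +
              (1 : UniversalEnvelopingAlgebra ℝ L) ⊗ₜ[ℝ]
                UniversalEnvelopingAlgebra.ι ℝ (b (Sum.inr m))) =
        - ∑ i : Fin n, ∑ j : Fin n,
          f i j m • (UniversalEnvelopingAlgebra.ι ℝ (b (Sum.inr i)) ⊗ₜ[ℝ]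
            UniversalEnvelopingAlgebra.ι ℝ (b (Sum.inr j)))) := by
  letI : LieRing (UniversalEnvelopingAlgebra ℝ L) := LieRing.ofAssociativeRing
  -- notation
  set ι' := UniversalEnvelopingAlgebra.ι ℝ (L := L) with hι
  -- antisymmetry of f
  have hf : ∀ i j k : Fin n, f j i k = - f i j k := by
    intro i j k
    have h0 : (∑ t, (f i j t + f j i t) • b (Sum.inl t)) = 0 := by
      have h1 := hxx i j
      have h2 := hxx j i
      have h3 : ⁅b (Sum.inl i), b (Sum.inl j)⁆ + ⁅b (Sum.inl j), b (Sum.inl i)⁆ = 0 := by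
        rw [← lie_skew (b (Sum.inl i)) (b (Sum.inl j))]; abel
      rw [h1, h2, ← Finset.sum_add_distrib] at h3
      simpa [add_smul] using h3
    have h4 := congrArg (fun z => b.repr z (Sum.inl k)) h0
    simp only [map_sum, map_smul, Module.Basis.repr_self, Finsupp.smul_apply, Finsupp.single_apply,
      Sum.inl.injEq, map_zero, Finsupp.coe_zero, Pi.zero_apply, Finset.sum_apply'] at h4
    have h5 : f i j k + f j i k = 0 := by
      simpa [Finset.sum_ite_eq', smul_eq_mul] using h4
    linarith
  -- commutator with rmat, termwise
  have ιsum : ∀ (g : Fin n → L), ι' (∑ k, g k) = ∑ k, ι' (g k) := fun g =>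
    map_sum ι' g Finset.univ
  have key : ∀ a : L,
      (ι' a ⊗ₜ[ℝ] (1 : UniversalEnvelopingAlgebra ℝ L) +
          (1 : UniversalEnvelopingAlgebra ℝ L) ⊗ₜ[ℝ] ι' a) * rmat n L b -
        rmat n L b * (ι' a ⊗ₜ[ℝ] (1 : UniversalEnvelopingAlgebra ℝ L) +
          (1 : UniversalEnvelopingAlgebra ℝ L) ⊗ₜ[ℝ] ι' a) =
      ∑ i : Fin n, (ι' ⁅a, b (Sum.inl i)⁆ ⊗ₜ[ℝ] ι' (b (Sum.inr i)) +
        ι' (b (Sum.inl i)) ⊗ₜ[ℝ] ι' ⁅a, b (Sum.inr i)⁆) := by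
    intro a
    rw [rmat, Finset.mul_sum, Finset.sum_mul, ← Finset.sum_sub_distrib]
    refine Finset.sum_congr rfl fun i _ => ?_
    rw [comm_tmul_aux]
    rw [← Ring.lie_def, ← Ring.lie_def, ← LieHom.map_lie, ← LieHom.map_lie]
  constructor
  · intro m
    rw [key (b (Sum.inl m))]
    have expand : ∀ i : Fin n,
        ι' ⁅b (Sum.inl m), b (Sum.inl i)⁆ ⊗ₜ[ℝ] ι' (b (Sum.inr i)) +
          ι' (b (Sum.inl i)) ⊗ₜ[ℝ] ι' ⁅b (Sum.inl m), b (Sum.inr i)⁆ =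
        (∑ k, f m i k • (ι' (b (Sum.inl k)) ⊗ₜ[ℝ] ι' (b (Sum.inr i)))) +
          ((∑ k, c m i k • (ι' (b (Sum.inl i)) ⊗ₜ[ℝ] ι' (b (Sum.inl k)))) -
            ∑ k, f m k i • (ι' (b (Sum.inl i)) ⊗ₜ[ℝ] ι' (b (Sum.inr k)))) := by
      intro i
      rw [hxx m i, hxX m i, map_sub, ιsum, ιsum, ιsum]
      simp [map_smul, TensorProduct.sum_tmul, TensorProduct.tmul_sum,
        TensorProduct.smul_tmul', TensorProduct.tmul_smul, TensorProduct.tmul_sub]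
    calc (∑ i : Fin n, (ι' ⁅b (Sum.inl m), b (Sum.inl i)⁆ ⊗ₜ[ℝ] ι' (b (Sum.inr i)) +
            ι' (b (Sum.inl i)) ⊗ₜ[ℝ] ι' ⁅b (Sum.inl m), b (Sum.inr i)⁆))
        = (∑ i : Fin n, ∑ k, f m i k • (ι' (b (Sum.inl k)) ⊗ₜ[ℝ] ι' (b (Sum.inr i)))) +
            ((∑ i : Fin n, ∑ k, c m i k • (ι' (b (Sum.inl i)) ⊗ₜ[ℝ] ι' (b (Sum.inl k)))) -
              ∑ i : Fin n, ∑ k, f m k i • (ι' (b (Sum.inl i)) ⊗ₜ[ℝ] ι' (b (Sum.inr k)))) := by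
          rw [← Finset.sum_sub_distrib, ← Finset.sum_add_distrib]
          exact Finset.sum_congr rfl fun i _ => expand i
      _ = ∑ i : Fin n, ∑ j : Fin n, c m i j • (ι' (b (Sum.inl i)) ⊗ₜ[ℝ] ι' (b (Sum.inl j))) := by
          rw [Finset.sum_comm]
          abel
  · intro m
    rw [key (b (Sum.inr m))]
    have expand : ∀ i : Fin n,
        ι' ⁅b (Sum.inr m), b (Sum.inl i)⁆ ⊗ₜ[ℝ] ι' (b (Sum.inr i)) +
          ι' (b (Sum.inl i)) ⊗ₜ[ℝ] ι' ⁅b (Sum.inr m), b (Sum.inr i)⁆ =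
        ((∑ k, f i k m • (ι' (b (Sum.inr k)) ⊗ₜ[ℝ] ι' (b (Sum.inr i)))) -
          ∑ k, c i m k • (ι' (b (Sum.inl k)) ⊗ₜ[ℝ] ι' (b (Sum.inr i)))) +
          ∑ k, c k m i • (ι' (b (Sum.inl i)) ⊗ₜ[ℝ] ι' (b (Sum.inr k))) := by
      intro i
      have h1 : ⁅b (Sum.inr m), b (Sum.inl i)⁆ =
          (∑ k, f i k m • b (Sum.inr k)) - ∑ k, c i m k • b (Sum.inl k) := by
        rw [← lie_skew, hxX i m]; abel
      rw [h1, hXX m i, map_sub, ιsum, ιsum, ιsum]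
      simp [map_smul, TensorProduct.sum_tmul, TensorProduct.tmul_sum,
        TensorProduct.smul_tmul', TensorProduct.tmul_smul, TensorProduct.sub_tmul]
    calc (∑ i : Fin n, (ι' ⁅b (Sum.inr m), b (Sum.inl i)⁆ ⊗ₜ[ℝ] ι' (b (Sum.inr i)) +
            ι' (b (Sum.inl i)) ⊗ₜ[ℝ] ι' ⁅b (Sum.inr m), b (Sum.inr i)⁆))
        = ((∑ i : Fin n, ∑ k, f i k m • (ι' (b (Sum.inr k)) ⊗ₜ[ℝ] ι' (b (Sum.inr i)))) -
            ∑ i : Fin n, ∑ k, c i m k • (ι' (b (Sum.inl k)) ⊗ₜ[ℝ] ι' (b (Sum.inr i)))) +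
            ∑ i : Fin n, ∑ k, c k m i • (ι' (b (Sum.inl i)) ⊗ₜ[ℝ] ι' (b (Sum.inr k))) := by
          rw [← Finset.sum_sub_distrib, ← Finset.sum_add_distrib]
          exact Finset.sum_congr rfl fun i _ => expand i
      _ = ∑ i : Fin n, ∑ k, f i k m • (ι' (b (Sum.inr k)) ⊗ₜ[ℝ] ι' (b (Sum.inr i))) := by
          rw [Finset.sum_comm (f := fun i k => c i m k •
            (ι' (b (Sum.inl k)) ⊗ₜ[ℝ] ι' (b (Sum.inr i))))]
          abel
      _ = - ∑ i : Fin n, ∑ j : Fin n,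
            f i j m • (ι' (b (Sum.inr i)) ⊗ₜ[ℝ] ι' (b (Sum.inr j))) := by
          rw [Finset.sum_comm, ← Finset.sum_neg_distrib]
          refine Finset.sum_congr rfl fun i _ => ?_
          rw [← Finset.sum_neg_distrib]
          refine Finset.sum_congr rfl fun j _ => ?_
          rw [hf i j m, neg_smul]
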